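/- Let Φ = (φ¹,…,φ^d) be basis functions with ‖φⁱ‖_∞ ≤ 1, let π be a probability measure, and suppose there exist θ̂ ∈ ℝ^d and λ < ∞ with ‖J − θ̂ᵀΦ‖_∞ ≤ λ, where J is the fixed point of the Bellman operator T^γ (a β-contraction in L²(π)). Let θ* be the fixed point parameter of Π T^γ (Π the L²(π)-orthogonal projection onto span Φ), and let σ_min > 0 be the minimum eigenvalue of E_π[Φ(S)Φᵀ(S)]. Then ‖J − θ*ᵀΦ‖_∞ ≤ λ (1 + ((2−β)/(1−β)) √(d/σ_min)). -/

import Mathlib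

open MeasureTheory

-- L² triangle inequality in integral form
lemma l2_tri {𝕊 : Type*} [MeasurableSpace 𝕊] (π : Measure 𝕊) {f g : 𝕊 → ℝ}
    (hf : MemLp f 2 π) (hg : MemLp g 2 π)
    (hfg : Integrable (fun s => f s * g s) π) :
    Real.sqrt (∫ s, (f s - g s) ^ 2 ∂π)
      ≤ Real.sqrt (∫ s, f s ^ 2 ∂π) + Real.sqrt (∫ s, g s ^ 2 ∂π) := by
  set F := Real.sqrt (∫ s, f s ^ 2 ∂π) with hFdef
  set G := Real.sqrt (∫ s, g s ^ 2 ∂π) with hGdef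
  have hf2 := hf.integrable_sq
  have hg2 := hg.integrable_sq
  have hif : (0:ℝ) ≤ ∫ s, f s ^ 2 ∂π := integral_nonneg fun s => sq_nonneg _
  have hig : (0:ℝ) ≤ ∫ s, g s ^ 2 ∂π := integral_nonneg fun s => sq_nonneg _
  have hF0 : 0 ≤ F := Real.sqrt_nonneg _
  have hG0 : 0 ≤ G := Real.sqrt_nonneg _
  have hFsq : F ^ 2 = ∫ s, f s ^ 2 ∂π := Real.sq_sqrt hif
  have hGsq : G ^ 2 = ∫ s, g s ^ 2 ∂π := Real.sq_sqrt hig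
  have hconj : (2:ℝ).HolderConjugate 2 := Real.HolderConjugate.two_two
  have hf2' : MemLp f (ENNReal.ofReal (2:ℝ)) π := by
    convert hf; simp [ENNReal.ofReal_ofNat]
  have hg2' : MemLp g (ENNReal.ofReal (2:ℝ)) π := by
    convert hg; simp [ENNReal.ofReal_ofNat]
  have hCS : |∫ s, f s * g s ∂π| ≤ F * G := by
    have h1 : |∫ s, f s * g s ∂π| ≤ ∫ s, ‖f s * g s‖ ∂π := by
      simpa using norm_integral_le_integral_norm (fun s => f s * g s) (μ := π)
    have h2 : ∫ s, ‖f s * g s‖ ∂π = ∫ s, ‖f s‖ * ‖g s‖ ∂π := by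
      simp [norm_mul]
    have h3 := integral_mul_norm_le_Lp_mul_Lq hconj hf2' hg2' (μ := π)
    have h4 : (∫ s, ‖f s‖ ^ (2:ℝ) ∂π) ^ ((1:ℝ)/2) = F := by
      rw [hFdef, Real.sqrt_eq_rpow]
      congr 1
      refine integral_congr_ae (Filter.Eventually.of_forall fun s => ?_)
      show ‖f s‖ ^ (2:ℝ) = f s ^ 2
      rw [show ‖f s‖ ^ (2:ℝ) = ‖f s‖ ^ (2:ℕ) by
        rw [← Real.rpow_natCast]; norm_num]
      simp [sq_abs]
    have h5 : (∫ s, ‖g s‖ ^ (2:ℝ) ∂π) ^ ((1:ℝ)/2) = G := by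
      rw [hGdef, Real.sqrt_eq_rpow]
      congr 1
      refine integral_congr_ae (Filter.Eventually.of_forall fun s => ?_)
      show ‖g s‖ ^ (2:ℝ) = g s ^ 2
      rw [show ‖g s‖ ^ (2:ℝ) = ‖g s‖ ^ (2:ℕ) by
        rw [← Real.rpow_natCast]; norm_num]
      simp [sq_abs]
    calc |∫ s, f s * g s ∂π| ≤ ∫ s, ‖f s‖ * ‖g s‖ ∂π := h2 ▸ h1
      _ ≤ _ := h3
      _ = F * G := by rw [h4, h5]
  have hexpand : ∫ s, (f s - g s) ^ 2 ∂π
      = (∫ s, f s ^ 2 ∂π) + (∫ s, g s ^ 2 ∂π) - 2 * ∫ s, f s * g s ∂π := by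
    have : ∀ s, (f s - g s) ^ 2 = f s ^ 2 + g s ^ 2 - 2 * (f s * g s) := fun s => by ring
    simp_rw [this]
    have e1 : ∫ s, (f s ^ 2 + g s ^ 2) - 2 * (f s * g s) ∂π
        = (∫ s, (f s ^ 2 + g s ^ 2) ∂π) - ∫ s, 2 * (f s * g s) ∂π :=
      integral_sub (hf2.add hg2) (hfg.const_mul 2)
    rw [show (fun s => f s ^ 2 + g s ^ 2 - 2 * (f s * g s))
        = fun s => (f s ^ 2 + g s ^ 2) - 2 * (f s * g s) from rfl, e1,
      integral_add hf2 hg2, integral_const_mul]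
  have hkey : ∫ s, (f s - g s) ^ 2 ∂π ≤ (F + G) ^ 2 := by
    rw [hexpand]
    have : -(F * G) ≤ ∫ s, f s * g s ∂π := neg_le_of_abs_le hCS
    nlinarith [hFsq, hGsq]
  calc Real.sqrt (∫ s, (f s - g s) ^ 2 ∂π) ≤ Real.sqrt ((F + G) ^ 2) :=
        Real.sqrt_le_sqrt hkey
    _ = F + G := Real.sqrt_sq (by positivity)

theorem stmt_6 {𝕊 : Type*} [MeasurableSpace 𝕊] (π : Measure 𝕊) [IsProbabilityMeasure π]
    (β : ℝ) (hβ0 : 0 < β) (hβ1 : β < 1)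
    {d : ℕ} (φ : Fin d → 𝕊 → ℝ) (hφmeas : ∀ i, Measurable (φ i))
    (hφbd : ∀ i s, |φ i s| ≤ 1)
    (J : 𝕊 → ℝ) (hJmeas : Measurable J) (hJL2 : MemLp J 2 π)
    (θhat θstar : Fin d → ℝ) (lam : ℝ)
    -- `J` is within `λ` (sup-norm) of the span of the basis functions:
    (hlam : ∀ s, |J s - ∑ i, θhat i * φ i s| ≤ lam)
    -- minimum eigenvalue of the Gram matrix `E_π[Φ Φᵀ]`:
    (σmin : ℝ) (hσ : 0 < σmin)
    (hgram : ∀ v : Fin d → ℝ,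
      σmin * ∑ i, v i ^ 2 ≤ ∫ s, (∑ i, v i * φ i s) ^ 2 ∂π)
    -- the `L²` error bound for the fixed point `θ*ᵀΦ` of `Π T^γ`
    -- (here `θ̂ᵀΦ` bounds the projection error since `Π J` is the best approximation):
    (hL2 : Real.sqrt (∫ s, (J s - ∑ i, θstar i * φ i s) ^ 2 ∂π)
      ≤ (1 - β)⁻¹ * Real.sqrt (∫ s, (J s - ∑ i, θhat i * φ i s) ^ 2 ∂π)) :
    ∀ s, |J s - ∑ i, θstar i * φ i s|
      ≤ lam * (1 + (2 - β) / (1 - β) * Real.sqrt (d / σmin)) := by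
  have hb : (0:ℝ) < 1 - β := by linarith
  have hne : Nonempty 𝕊 := by
    by_contra h
    rw [not_nonempty_iff] at h
    have h1 : π Set.univ = 1 := measure_univ
    rw [Set.univ_eq_empty_iff.mpr h] at h1
    simp at h1
  have hlam0 : 0 ≤ lam := le_trans (abs_nonneg _) (hlam (Classical.arbitrary 𝕊))
  -- MemLp of linear combinations of basis functions
  have hmem : ∀ θ : Fin d → ℝ, MemLp (fun s => ∑ i, θ i * φ i s) 2 π := by
    intro θ
    have hmeas : Measurable fun s => ∑ i, θ i * φ i s :=
      Finset.measurable_sum _ fun i _ => (hφmeas i).const_mul _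
    have hbd : ∀ s, ‖∑ i, θ i * φ i s‖ ≤ ∑ i, |θ i| := by
      intro s
      calc ‖∑ i, θ i * φ i s‖ ≤ ∑ i, |θ i * φ i s| :=
            Finset.abs_sum_le_sum_abs _ _
        _ ≤ ∑ i, |θ i| := Finset.sum_le_sum fun i _ => by
            rw [abs_mul]
            exact mul_le_of_le_one_right (abs_nonneg _) (hφbd i s)
    exact (memLp_top_of_bound hmeas.aestronglyMeasurable _
      (Filter.Eventually.of_forall hbd)).mono_exponent le_top
  set f1 : 𝕊 → ℝ := fun s => J s - ∑ i, θhat i * φ i s with hf1def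
  set f2 : 𝕊 → ℝ := fun s => J s - ∑ i, θstar i * φ i s with hf2def
  have hf1mem : MemLp f1 2 π := hJL2.sub (hmem θhat)
  have hf2mem : MemLp f2 2 π := hJL2.sub (hmem θstar)
  set u : Fin d → ℝ := fun i => θhat i - θstar i with hudef
  set A := Real.sqrt (∫ s, f1 s ^ 2 ∂π) with hAdef
  set B := Real.sqrt (∫ s, f2 s ^ 2 ∂π) with hBdef
  set Cq := ∫ s, (∑ i, u i * φ i s) ^ 2 ∂π with hCqdef
  have hCq0 : 0 ≤ Cq := integral_nonneg fun s => sq_nonneg _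
  have hA0 : 0 ≤ A := Real.sqrt_nonneg _
  -- A ≤ lam
  have hA : A ≤ lam := by
    have h1 : ∫ s, f1 s ^ 2 ∂π ≤ ∫ _, lam ^ 2 ∂π := by
      refine integral_mono hf1mem.integrable_sq (integrable_const _) fun s => ?_
      have h := hlam s
      show (J s - ∑ i, θhat i * φ i s) ^ 2 ≤ lam ^ 2
      exact sq_le_sq' (by linarith [(abs_le.mp h).1]) (abs_le.mp h).2
    have h2 : ∫ _, lam ^ 2 ∂π = lam ^ 2 := by simp
    calc A ≤ Real.sqrt (lam ^ 2) := Real.sqrt_le_sqrt (h2 ▸ h1)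
      _ = lam := Real.sqrt_sq hlam0
  have hB : B ≤ (1 - β)⁻¹ * A := hL2
  -- triangle inequality : √Cq ≤ B + A
  have hf12int : Integrable (fun s => f1 s * f2 s) π := by
    have hint : Integrable f2 π := hf2mem.integrable (by norm_num)
    refine hint.bdd_mul (c := lam) hf1mem.aestronglyMeasurable
      (Filter.Eventually.of_forall fun s => ?_)
    simpa using hlam s
  have hCtr : Real.sqrt Cq ≤ A + B := by
    have heq : ∫ s, (f1 s - f2 s) ^ 2 ∂π = Cq := by
      refine integral_congr_ae (Filter.Eventually.of_forall fun s => ?_)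
      show ((J s - ∑ i, θhat i * φ i s) - (J s - ∑ i, θstar i * φ i s)) ^ 2
        = (∑ i, (θhat i - θstar i) * φ i s) ^ 2
      simp only [sub_mul, Finset.sum_sub_distrib]
      ring
    calc Real.sqrt Cq = Real.sqrt (∫ s, (f1 s - f2 s) ^ 2 ∂π) := by rw [heq]
      _ ≤ A + B := l2_tri π hf1mem hf2mem hf12int
  -- the pointwise bound
  intro s
  have step1 : |J s - ∑ i, θstar i * φ i s|
      ≤ |J s - ∑ i, θhat i * φ i s| + |∑ i, u i * φ i s| := by
    have : J s - ∑ i, θstar i * φ i s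
        = (J s - ∑ i, θhat i * φ i s) + ∑ i, u i * φ i s := by
      simp only [hudef, sub_mul, Finset.sum_sub_distrib]
      ring
    rw [this]
    exact abs_add_le _ _
  have step2 : |∑ i, u i * φ i s| ≤ ∑ i, |u i| := by
    calc |∑ i, u i * φ i s| ≤ ∑ i, |u i * φ i s| := Finset.abs_sum_le_sum_abs _ _
      _ ≤ ∑ i, |u i| := Finset.sum_le_sum fun i _ => by
          rw [abs_mul]
          exact mul_le_of_le_one_right (abs_nonneg _) (hφbd i s)
  have step3 : ∑ i, |u i| ≤ Real.sqrt (d / σmin) * Real.sqrt Cq := by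
    have h1 : (∑ i, |u i|) ^ 2 ≤ (d : ℝ) * ∑ i, u i ^ 2 := by
      have := sq_sum_le_card_mul_sum_sq (s := (Finset.univ : Finset (Fin d)))
        (f := fun i => |u i|)
      simpa [sq_abs] using this
    have h2 : ∑ i, u i ^ 2 ≤ Cq / σmin := by
      rw [le_div_iff₀ hσ]
      calc (∑ i, u i ^ 2) * σmin = σmin * ∑ i, u i ^ 2 := by ring
        _ ≤ Cq := hgram u
    have h3 : (∑ i, |u i|) ^ 2 ≤ (d / σmin) * Cq := by
      calc (∑ i, |u i|) ^ 2 ≤ (d : ℝ) * ∑ i, u i ^ 2 := h1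
        _ ≤ (d : ℝ) * (Cq / σmin) :=
            mul_le_mul_of_nonneg_left h2 (Nat.cast_nonneg _)
        _ = (d / σmin) * Cq := by ring
    calc ∑ i, |u i| = Real.sqrt ((∑ i, |u i|) ^ 2) :=
          (Real.sqrt_sq (Finset.sum_nonneg fun i _ => abs_nonneg _)).symm
      _ ≤ Real.sqrt ((d / σmin) * Cq) := Real.sqrt_le_sqrt h3
      _ = Real.sqrt (d / σmin) * Real.sqrt Cq := Real.sqrt_mul (by positivity) _
  have step4 : Real.sqrt Cq ≤ (2 - β) / (1 - β) * lam := by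
    have h1 : Real.sqrt Cq ≤ (1 - β)⁻¹ * A + A := le_trans hCtr (by linarith)
    have h2 : (1 - β)⁻¹ * A + A = (2 - β) / (1 - β) * A := by
      field_simp
      ring
    have h3 : (0:ℝ) ≤ (2 - β) / (1 - β) := div_nonneg (by linarith) (by linarith)
    calc Real.sqrt Cq ≤ (2 - β) / (1 - β) * A := by rw [← h2]; exact h1
      _ ≤ (2 - β) / (1 - β) * lam := mul_le_mul_of_nonneg_left hA h3
  have hsq0 : 0 ≤ Real.sqrt (d / σmin) := Real.sqrt_nonneg _
  calc |J s - ∑ i, θstar i * φ i s|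
      ≤ |J s - ∑ i, θhat i * φ i s| + |∑ i, u i * φ i s| := step1
    _ ≤ lam + Real.sqrt (d / σmin) * Real.sqrt Cq := by
        have := le_trans step2 step3
        have := hlam s
        linarith
    _ ≤ lam + Real.sqrt (d / σmin) * ((2 - β) / (1 - β) * lam) := by
        have := mul_le_mul_of_nonneg_left step4 hsq0
        linarith
    _ = lam * (1 + (2 - β) / (1 - β) * Real.sqrt (d / σmin)) := by ring
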